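/- arXiv:1808.08153 — 2 statements merged into one kernel-verified Lean document; each statement's English description precedes it below -/
import Mathlib

section
/- Let R̂ be a real m × m' matrix with singular value decomposition R̂ = Σ_k σ_k u_k v_kᵀ (σ_1 ≥ σ_2 ≥ … ≥ 0), let α > 0, and let R̃(α) = Σ_k σ_k 1(σ_k > α) u_k v_kᵀ be the spectral hard threshold of R̂ at level α. Then R̃(α) minimizes the rank-penalized criterion: for every real m × m' matrix S, ‖R̂ − R̃(α)‖_F² + α² rank(R̃(α)) ≤ ‖R̂ − S‖_F² + α² rank(S). -/
open Finset

noncomputable section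

/-- Squared Frobenius norm of a real matrix. -/
def frobSq {m m' : ℕ} (A : Matrix (Fin m) (Fin m') ℝ) : ℝ :=
  ∑ i, ∑ j, A i j ^ 2



lemma frobGen {m m' K : ℕ} (u : Fin K → Fin m → ℝ) (y : Fin K → Fin m' → ℝ)
    (hu : ∀ k l, (∑ i, u k i * u l i) = if k = l then (1:ℝ) else 0) :
    ∑ i, ∑ j, (∑ k, u k i * y k j)^2 = ∑ k, ∑ j, (y k j)^2 := by
  have step : ∀ i j, (∑ k, u k i * y k j)^2
      = ∑ k, ∑ l, (u k i * u l i) * (y k j * y l j) := by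
    intro i j
    rw [sq, Finset.sum_mul_sum]
    apply Finset.sum_congr rfl; intro k _
    apply Finset.sum_congr rfl; intro l _
    ring
  simp only [step]
  rw [Finset.sum_comm]
  have : ∀ j, ∑ i, ∑ k, ∑ l, (u k i * u l i) * (y k j * y l j)
      = ∑ k, (y k j)^2 := by
    intro j
    rw [Finset.sum_comm]
    have : ∀ k, ∑ i, ∑ l, (u k i * u l i) * (y k j * y l j)
        = (y k j)^2 := by
      intro k
      rw [Finset.sum_comm]
      have : ∀ l, ∑ i, (u k i * u l i) * (y k j * y l j)
          = (if k = l then 1 else 0) * (y k j * y l j) := by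
        intro l
        rw [← Finset.sum_mul, hu]
      simp only [this, ite_mul, one_mul, zero_mul]
      rw [Finset.sum_ite_eq]
      simp [sq]
    simp only [this]
  simp only [this]
  rw [Finset.sum_comm]

lemma bessel_id {n r : ℕ} (w : Fin r → Fin n → ℝ)
    (hw : ∀ k l, (∑ j, w k j * w l j) = if k = l then (1:ℝ) else 0)
    (a : Fin n → ℝ) :
    ∑ j, (a j - ∑ l, (∑ j', a j' * w l j') * w l j)^2
      = ∑ j, (a j)^2 - ∑ l, (∑ j', a j' * w l j')^2 := by
  set c : Fin r → ℝ := fun l => ∑ j', a j' * w l j' with hc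
  have h1 : ∑ j, a j * (∑ l, c l * w l j) = ∑ l, (c l)^2 := by
    have : ∀ j, a j * (∑ l, c l * w l j) = ∑ l, c l * (a j * w l j) := by
      intro j; rw [Finset.mul_sum]; exact Finset.sum_congr rfl fun l _ => by ring
    simp only [this]
    rw [Finset.sum_comm]
    apply Finset.sum_congr rfl; intro l _
    rw [← Finset.mul_sum, hc, sq]
  have h2 : ∑ j, (∑ l, c l * w l j)^2 = ∑ l, (c l)^2 := by
    have step : ∀ j, (∑ l, c l * w l j)^2
        = ∑ l, ∑ l', (c l * c l') * (w l j * w l' j) := by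
      intro j
      rw [sq, Finset.sum_mul_sum]
      exact Finset.sum_congr rfl fun l _ => Finset.sum_congr rfl fun l' _ => by ring
    simp only [step]
    rw [Finset.sum_comm]
    have : ∀ l, ∑ j, ∑ l', (c l * c l') * (w l j * w l' j) = (c l)^2 := by
      intro l
      rw [Finset.sum_comm]
      have : ∀ l', ∑ j, (c l * c l') * (w l j * w l' j)
          = (c l * c l') * (if l = l' then 1 else 0) := by
        intro l'
        rw [← Finset.mul_sum, hw]
      simp only [this, mul_ite, mul_one, mul_zero]
      rw [Finset.sum_ite_eq]
      simp [sq]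
    simp only [this]
  have expand : ∀ j, (a j - ∑ l, c l * w l j)^2
      = (a j)^2 - 2 * (a j * (∑ l, c l * w l j)) + (∑ l, c l * w l j)^2 := by
    intro j; ring
  show ∑ j, (a j - ∑ l, c l * w l j)^2 = ∑ j, (a j)^2 - ∑ l, (c l)^2
  simp only [expand]
  rw [Finset.sum_add_distrib, Finset.sum_sub_distrib, h2, ← Finset.mul_sum, h1]
  ring


set_option maxHeartbeats 1000000 in
lemma exists_onb_rows {m m' : ℕ} (S : Matrix (Fin m) (Fin m') ℝ) :
    ∃ (r : ℕ) (w : Fin r → Fin m' → ℝ), r ≤ S.rank ∧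
      (∀ k l, (∑ j, w k j * w l j) = if k = l then (1:ℝ) else 0) ∧
      ∀ i, ∃ c : Fin r → ℝ, ∀ j, S i j = ∑ l, c l * w l j := by
  classical
  let φ : EuclideanSpace ℝ (Fin m') ≃ₗ[ℝ] (Fin m' → ℝ) := WithLp.linearEquiv 2 ℝ (Fin m' → ℝ)
  let s : Fin m → EuclideanSpace ℝ (Fin m') := fun i => φ.symm (S i)
  let V : Submodule ℝ (EuclideanSpace ℝ (Fin m')) := Submodule.span ℝ (Set.range s)
  let b := stdOrthonormalBasis ℝ V
  refine ⟨Module.finrank ℝ V,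
    fun l j => ((b l : V) : EuclideanSpace ℝ (Fin m')) j, ?_, ?_, ?_⟩
  · -- finrank V ≤ S.rank
    have h1 : Submodule.map (φ : EuclideanSpace ℝ (Fin m') →ₗ[ℝ] (Fin m' → ℝ)) V
        = Submodule.span ℝ (Set.range fun i => S i) := by
      rw [Submodule.map_span, ← Set.range_comp]
      have hfun : (⇑((φ : EuclideanSpace ℝ (Fin m') →ₗ[ℝ] (Fin m' → ℝ))) ∘ s)
          = fun i => S i := by
        funext i; simp [s, φ]
      rw [hfun]
    have h2 : Module.finrank ℝ V
        = Module.finrank ℝ (Submodule.span ℝ (Set.range fun i => S i)) := by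
      rw [← h1]
      exact (LinearEquiv.finrank_map_eq φ V).symm
    have h3 : Submodule.span ℝ (Set.range fun i => S i)
        = LinearMap.range (Matrix.mulVecLin (Matrix.transpose S)) := by
      rw [Matrix.range_mulVecLin]; rfl
    have h4 : Matrix.rank (Matrix.transpose S) = S.rank := Matrix.rank_transpose S
    rw [h2, h3, ← h4]
    exact le_of_eq rfl
  · -- orthonormality
    intro k l
    have horth := (stdOrthonormalBasis ℝ V).orthonormal
    rw [orthonormal_iff_ite] at horth
    have h := horth k l
    rw [Submodule.coe_inner, PiLp.inner_apply] at h
    rw [← h]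
    exact Finset.sum_congr rfl fun j _ => by simp [b, mul_comm]
  · -- rows in span
    intro i
    have hmem : s i ∈ V := Submodule.subset_span (Set.mem_range_self i)
    set c : Fin (Module.finrank ℝ V) → ℝ := fun l => b.repr ⟨s i, hmem⟩ l with hc
    refine ⟨c, ?_⟩
    intro j
    have hs : (∑ l, c l • b l : V) = ⟨s i, hmem⟩ := b.sum_repr ⟨s i, hmem⟩
    let ψ : V →ₗ[ℝ] ℝ := (PiLp.projₗ 2 (fun _ : Fin m' => ℝ) j).comp V.subtype
    have h5 : ψ (∑ l, c l • b l) = ψ ⟨s i, hmem⟩ := by rw [hs]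
    rw [map_sum] at h5
    have h6 : ψ ⟨s i, hmem⟩ = S i j := rfl
    have h7 : ∀ l, ψ (c l • b l) = c l * ((b l : V) : EuclideanSpace ℝ (Fin m')) j := by
      intro l
      rfl
    rw [h6] at h5
    rw [← h5]
    exact (Finset.sum_congr rfl fun l _ => h7 l).symm

lemma bessel_le {n r : ℕ} (w : Fin r → Fin n → ℝ)
    (hw : ∀ k l, (∑ j, w k j * w l j) = if k = l then (1:ℝ) else 0)
    (a : Fin n → ℝ) :
    ∑ l, (∑ j', a j' * w l j')^2 ≤ ∑ j, (a j)^2 := by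
  have h := bessel_id w hw a
  have h0 : (0:ℝ) ≤ ∑ j, (a j - ∑ l, (∑ j', a j' * w l j') * w l j)^2 :=
    Finset.sum_nonneg fun _ _ => sq_nonneg _
  linarith

lemma rhs_bound {m m' K r : ℕ} (σ : Fin K → ℝ)
    (u : Fin K → Fin m → ℝ) (v : Fin K → Fin m' → ℝ)
    (hu : ∀ k l, (∑ i, u k i * u l i) = if k = l then (1:ℝ) else 0)
    (hv : ∀ k l, (∑ j, v k j * v l j) = if k = l then (1:ℝ) else 0)
    (w : Fin r → Fin m' → ℝ)
    (hw : ∀ k l, (∑ j, w k j * w l j) = if k = l then (1:ℝ) else 0)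
    (Rhat S : Matrix (Fin m) (Fin m') ℝ)
    (hRhat : ∀ i j, Rhat i j = ∑ k, σ k * u k i * v k j)
    (hS : ∀ i, ∃ c : Fin r → ℝ, ∀ j, S i j = ∑ l, c l * w l j) :
    ∑ k, σ k ^2 * (1 - ∑ l, (∑ j, v k j * w l j)^2)
      ≤ ∑ i, ∑ j, (Rhat i j - S i j)^2 := by
  set g : Fin K → Fin r → ℝ := fun k l => ∑ j, v k j * w l j with hg
  set Pv : Fin K → Fin m' → ℝ := fun k j => v k j - ∑ l, g k l * w l j with hPv
  -- step B : for each k, ∑ j, (Pv k j)^2 = 1 - ∑ l, (g k l)^2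
  have stepB : ∀ k, ∑ j, (Pv k j)^2 = 1 - ∑ l, (g k l)^2 := by
    intro k
    have h := bessel_id w hw (v k)
    have h1 : ∑ j, (v k j)^2 = 1 := by
      have h2 := hv k k
      rw [show (if k = k then (1:ℝ) else 0) = 1 from if_pos rfl] at h2
      rw [← h2]
      exact Finset.sum_congr rfl fun j _ => by ring
    rw [h1] at h
    exact h
  -- step C : per-row projection identity
  have claim1 : ∀ i j, (Rhat i j - S i j)
      - ∑ l, (∑ j', (Rhat i j' - S i j') * w l j') * w l j
      = ∑ k, u k i * (σ k * Pv k j) := by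
    intro i j
    obtain ⟨c, hc⟩ := hS i
    have hSw : ∀ l, ∑ j', S i j' * w l j' = c l := by
      intro l
      have : ∀ j', S i j' * w l j' = ∑ l', c l' * (w l' j' * w l j') := by
        intro j'
        rw [hc j', Finset.sum_mul]
        exact Finset.sum_congr rfl fun l' _ => by ring
      simp only [this]
      rw [Finset.sum_comm]
      have : ∀ l', ∑ j', c l' * (w l' j' * w l j') = c l' * (if l' = l then 1 else 0) := by
        intro l'
        rw [← Finset.mul_sum, hw]
      simp only [this, mul_ite, mul_one, mul_zero]
      rw [Finset.sum_ite_eq' Finset.univ l c]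
      simp
    have hRw : ∀ l, ∑ j', Rhat i j' * w l j' = ∑ k, σ k * u k i * g k l := by
      intro l
      have : ∀ j', Rhat i j' * w l j' = ∑ k, σ k * u k i * (v k j' * w l j') := by
        intro j'
        rw [hRhat i j', Finset.sum_mul]
        exact Finset.sum_congr rfl fun k _ => by ring
      simp only [this]
      rw [Finset.sum_comm]
      exact Finset.sum_congr rfl fun k _ => by rw [← Finset.mul_sum, hg]
    have hsub : ∀ l, ∑ j', (Rhat i j' - S i j') * w l j'
        = (∑ k, σ k * u k i * g k l) - c l := by
      intro l
      rw [← hRw l, ← hSw l, ← Finset.sum_sub_distrib]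
      exact Finset.sum_congr rfl fun j' _ => by ring
    simp only [hsub]
    rw [hRhat i j, hc j]
    have expand : ∀ l, ((∑ k, σ k * u k i * g k l) - c l) * w l j
        = (∑ k, σ k * u k i * (g k l * w l j)) - c l * w l j := by
      intro l
      rw [sub_mul, Finset.sum_mul]
      congr 1
      exact Finset.sum_congr rfl fun k _ => by ring
    simp only [expand]
    rw [Finset.sum_sub_distrib, Finset.sum_comm]
    have : ∀ k, u k i * (σ k * Pv k j)
        = σ k * u k i * v k j - ∑ l, σ k * u k i * (g k l * w l j) := by
      intro k
      rw [hPv]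
      simp only
      rw [mul_sub, mul_sub, Finset.mul_sum, Finset.mul_sum]
      congr 1
      · ring
      · congr 1; exact funext fun l => by ring
    rw [Finset.sum_congr rfl fun k _ => this k, Finset.sum_sub_distrib]
    ring
  -- combine
  have key : ∑ i, ∑ j, (∑ k, u k i * (σ k * Pv k j))^2
      = ∑ k, σ k ^2 * (1 - ∑ l, (g k l)^2) := by
    rw [frobGen u (fun k j => σ k * Pv k j) hu]
    apply Finset.sum_congr rfl
    intro k _
    rw [← stepB k, Finset.mul_sum]
    exact Finset.sum_congr rfl fun j _ => by ring
  rw [← key]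
  apply Finset.sum_le_sum
  intro i _
  have hb := bessel_id w hw (fun j => Rhat i j - S i j)
  have h0 : ∑ l, (∑ j', (Rhat i j' - S i j') * w l j')^2 ≥ 0 :=
    Finset.sum_nonneg fun _ _ => sq_nonneg _
  calc ∑ j, (∑ k, u k i * (σ k * Pv k j))^2
      = ∑ j, ((Rhat i j - S i j)
          - ∑ l, (∑ j', (Rhat i j' - S i j') * w l j') * w l j)^2 := by
        exact Finset.sum_congr rfl fun j _ => by rw [claim1 i j]
    _ = ∑ j, (Rhat i j - S i j)^2
          - ∑ l, (∑ j', (Rhat i j' - S i j') * w l j')^2 := hb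
    _ ≤ ∑ j, (Rhat i j - S i j)^2 := by linarith


lemma rank_Rtil_le {m m' K : ℕ} (σ : Fin K → ℝ) (α : ℝ)
    (u : Fin K → Fin m → ℝ) (v : Fin K → Fin m' → ℝ)
    (Rtil : Matrix (Fin m) (Fin m') ℝ)
    (hRtil : ∀ i j, Rtil i j = ∑ k, (if α < σ k then σ k else 0) * u k i * v k j) :
    (Rtil.rank : ℝ) ≤ ((Finset.univ.filter fun k => α < σ k).card : ℝ) := by
  classical
  set T : Finset (Fin K) := Finset.univ.filter fun k => α < σ k with hT
  let A : Matrix (Fin m) {k // k ∈ T} ℝ := fun i k => (if α < σ k.1 then σ k.1 else 0) * u k.1 i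
  let B : Matrix {k // k ∈ T} (Fin m') ℝ := fun k j => v k.1 j
  have hfact : Rtil = A * B := by
    ext i j
    rw [Matrix.mul_apply, hRtil i j]
    have h1 : ∑ k : Fin K, (if α < σ k then σ k else 0) * u k i * v k j
        = ∑ k ∈ T, (if α < σ k then σ k else 0) * u k i * v k j := by
      rw [hT, Finset.sum_filter]
      apply Finset.sum_congr rfl
      intro k _
      by_cases h : α < σ k <;> simp [h]
    rw [h1, ← Finset.sum_attach T (fun k => (if α < σ k then σ k else 0) * u k i * v k j)]
    apply Finset.sum_congr rfl
    intro k _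
    simp [A, B, mul_assoc]
  have h2 : Rtil.rank ≤ T.card := by
    rw [hfact]
    calc (A * B).rank ≤ A.rank := Matrix.rank_mul_le_left A B
      _ ≤ Fintype.card {k // k ∈ T} := Matrix.rank_le_card_width A
      _ = T.card := Fintype.card_coe T
  exact_mod_cast h2

/-- the spectral hard threshold `Rtil(α)` of a matrix `Rhat` with SVD
`Rhat = Σ_k σ_k u_k v_kᵀ` minimizes the rank-penalized criterion
`S ↦ ‖Rhat − S‖_F² + α² rank S`. -/
theorem statement2 (m m' K : ℕ) (σ : Fin K → ℝ)
    (u : Fin K → Fin m → ℝ) (v : Fin K → Fin m' → ℝ)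
    (hσ0 : ∀ k, 0 ≤ σ k) (hσanti : Antitone σ)
    (hu : ∀ k l, (∑ i, u k i * u l i) = if k = l then (1:ℝ) else 0)
    (hv : ∀ k l, (∑ j, v k j * v l j) = if k = l then (1:ℝ) else 0)
    (Rhat Rtil : Matrix (Fin m) (Fin m') ℝ)
    (hRhat : ∀ i j, Rhat i j = ∑ k, σ k * u k i * v k j)
    (α : ℝ) (hα : 0 < α)
    (hRtil : ∀ i j, Rtil i j = ∑ k, (if α < σ k then σ k else 0) * u k i * v k j) :
    ∀ S : Matrix (Fin m) (Fin m') ℝ,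
      frobSq (Rhat - Rtil) + α ^ 2 * (Rtil.rank : ℝ) ≤ frobSq (Rhat - S) + α ^ 2 * (S.rank : ℝ) := by
  intro S
  classical
  -- normalization of squared v-norms
  have hvnorm : ∀ k, ∑ j, (v k j)^2 = 1 := by
    intro k
    have h2 := hv k k
    rw [show (if k = k then (1:ℝ) else 0) = 1 from if_pos rfl] at h2
    rw [← h2]
    exact Finset.sum_congr rfl fun j _ => by ring
  -- LHS frobenius part
  have hL1 : frobSq (Rhat - Rtil) = ∑ k, (if α < σ k then 0 else σ k)^2 := by
    have hentry : ∀ i j, (Rhat - Rtil) i j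
        = ∑ k, u k i * ((if α < σ k then 0 else σ k) * v k j) := by
      intro i j
      have : (Rhat - Rtil) i j = Rhat i j - Rtil i j := rfl
      rw [this, hRhat i j, hRtil i j, ← Finset.sum_sub_distrib]
      apply Finset.sum_congr rfl
      intro k _
      by_cases h : α < σ k <;> simp [h] <;> ring
    have : frobSq (Rhat - Rtil)
        = ∑ i, ∑ j, (∑ k, u k i * ((if α < σ k then 0 else σ k) * v k j))^2 := by
      unfold frobSq
      exact Finset.sum_congr rfl fun i _ => Finset.sum_congr rfl fun j _ => by
        rw [hentry i j]
    rw [this, frobGen u _ hu]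
    apply Finset.sum_congr rfl
    intro k _
    have : ∑ j, ((if α < σ k then 0 else σ k) * v k j)^2
        = (if α < σ k then 0 else σ k)^2 * ∑ j, (v k j)^2 := by
      rw [Finset.mul_sum]
      exact Finset.sum_congr rfl fun j _ => by ring
    rw [this, hvnorm k, mul_one]
  set T : Finset (Fin K) := Finset.univ.filter fun k => α < σ k with hT
  set μ : Fin K → ℝ := fun k => if α < σ k then α^2 else (σ k)^2 with hμdef
  -- LHS ≤ ∑ μ
  have hLHS : frobSq (Rhat - Rtil) + α ^ 2 * (Rtil.rank : ℝ) ≤ ∑ k, μ k := by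
    have hcard : (T.card : ℝ) = ∑ k, (if α < σ k then (1:ℝ) else 0) := by
      rw [hT, Finset.card_filter]
      push_cast
      simp
    have hsum : ∑ k, (if α < σ k then 0 else σ k)^2 + α^2 * (T.card : ℝ) = ∑ k, μ k := by
      rw [hcard, Finset.mul_sum, ← Finset.sum_add_distrib]
      apply Finset.sum_congr rfl
      intro k _
      by_cases h : α < σ k <;> simp [hμdef, h] <;> ring
    have hrank := rank_Rtil_le σ α u v Rtil hRtil
    rw [hL1, ← hsum]
    have : α^2 * (Rtil.rank : ℝ) ≤ α^2 * (T.card : ℝ) := by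
      apply mul_le_mul_of_nonneg_left _ (sq_nonneg α)
      exact hrank
    linarith
  -- RHS ≥ ∑ μ
  obtain ⟨r, w, hrle, hw, hS⟩ := exists_onb_rows S
  set g : Fin K → Fin r → ℝ := fun k l => ∑ j, v k j * w l j with hg
  set d : Fin K → ℝ := fun k => ∑ l, (g k l)^2 with hd
  have hd0 : ∀ k, 0 ≤ d k := fun k => Finset.sum_nonneg fun _ _ => sq_nonneg _
  have hd1 : ∀ k, d k ≤ 1 := by
    intro k
    have := bessel_le w hw (v k)
    rw [hvnorm k] at this
    exact this
  have hdsum : ∑ k, d k ≤ (r : ℝ) := by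
    have hswap : ∑ k, d k = ∑ l, ∑ k, (g k l)^2 := Finset.sum_comm
    rw [hswap]
    have hwnorm : ∀ l, ∑ j, (w l j)^2 = 1 := by
      intro l
      have h2 := hw l l
      rw [show (if l = l then (1:ℝ) else 0) = 1 from if_pos rfl] at h2
      rw [← h2]
      exact Finset.sum_congr rfl fun j _ => by ring
    calc ∑ l, ∑ k, (g k l)^2 ≤ ∑ l : Fin r, (1:ℝ) := by
          apply Finset.sum_le_sum
          intro l _
          have := bessel_le v hv (w l)
          rw [hwnorm l] at this
          calc ∑ k, (g k l)^2 = ∑ k, (∑ j', w l j' * v k j')^2 := by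
                apply Finset.sum_congr rfl
                intro k _
                rw [hg]
                congr 1
                exact Finset.sum_congr rfl fun j _ => by ring
            _ ≤ 1 := this
      _ = (r : ℝ) := by simp
  have hRHS1 : ∑ k, σ k ^2 * (1 - d k) ≤ frobSq (Rhat - S) := by
    have := rhs_bound σ u v hu hv w hw Rhat S hRhat hS
    unfold frobSq
    calc ∑ k, σ k ^2 * (1 - d k)
        = ∑ k, σ k ^2 * (1 - ∑ l, (∑ j, v k j * w l j)^2) := rfl
      _ ≤ ∑ i, ∑ j, (Rhat i j - S i j)^2 := this
      _ = ∑ i, ∑ j, ((Rhat - S) i j)^2 := rfl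
  have hpoint : ∀ k, μ k ≤ σ k ^2 * (1 - d k) + α^2 * d k := by
    intro k
    have h0 := hd0 k
    have h1 := hd1 k
    have hσ := hσ0 k
    by_cases h : α < σ k
    · simp only [hμdef, if_pos h]
      have hσα : α^2 ≤ σ k^2 := by nlinarith
      nlinarith [mul_nonneg (sub_nonneg.mpr hσα) (sub_nonneg.mpr h1)]
    · simp only [hμdef, if_neg h]
      push_neg at h
      have hσα : σ k^2 ≤ α^2 := by nlinarith
      nlinarith [mul_nonneg (sub_nonneg.mpr hσα) h0]
  have hRHS : ∑ k, μ k ≤ frobSq (Rhat - S) + α ^ 2 * (S.rank : ℝ) := by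
    have h1 : ∑ k, μ k ≤ ∑ k, (σ k ^2 * (1 - d k) + α^2 * d k) :=
      Finset.sum_le_sum fun k _ => hpoint k
    have h2 : ∑ k, (σ k ^2 * (1 - d k) + α^2 * d k)
        = ∑ k, σ k ^2 * (1 - d k) + α^2 * ∑ k, d k := by
      rw [Finset.sum_add_distrib, Finset.mul_sum]
    have h3 : α^2 * ∑ k, d k ≤ α^2 * (r : ℝ) :=
      mul_le_mul_of_nonneg_left hdsum (sq_nonneg α)
    have h4 : α^2 * (r : ℝ) ≤ α^2 * (S.rank : ℝ) := by
      apply mul_le_mul_of_nonneg_left _ (sq_nonneg α)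
      exact_mod_cast hrle
    linarith
  linarith

end
end

section
/- Let R̂, R be real m × m' matrices and α > 0 with ‖R̂ − R‖_op ≤ α/2. Let R̃ = R̃(α) be the spectral hard threshold of R̂ at level α (equivalently, any minimizer of S ↦ ‖R̂ − S‖_F² + α² rank(S)). Then for every real m × m' matrix S: ‖R̃ − R‖_F² ≤ 3 ‖S − R‖_F² + 4 α² rank(S). -/
noncomputable section

/-- Spectral (operator) norm of a real matrix, i.e. the operator norm of the induced
linear map between Euclidean spaces. -/
def opNorm {m m' : ℕ} (A : Matrix (Fin m) (Fin m') ℝ) : ℝ :=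
  ‖LinearMap.toContinuousLinearMap (Matrix.toEuclideanLin A)‖

namespace Stmt3Aux

open Matrix Finset

lemma opNorm_nonneg {m m' : ℕ} (A : Matrix (Fin m) (Fin m') ℝ) : 0 ≤ opNorm A :=
  norm_nonneg _

lemma frobSq_nonneg {m m' : ℕ} (A : Matrix (Fin m) (Fin m') ℝ) : 0 ≤ frobSq A :=
  Finset.sum_nonneg fun _ _ => Finset.sum_nonneg fun _ _ => sq_nonneg _

lemma norm_toEuc_le {m m' : ℕ} (D : Matrix (Fin m) (Fin m') ℝ) (x : EuclideanSpace ℝ (Fin m')) :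
    ‖Matrix.toEuclideanLin D x‖ ≤ opNorm D * ‖x‖ := by
  simpa [opNorm] using (LinearMap.toContinuousLinearMap (Matrix.toEuclideanLin D)).le_opNorm x

lemma csSum {ι : Type*} (s : Finset ι) (f g : ι → ℝ) :
    ∑ i ∈ s, f i * g i ≤ Real.sqrt (∑ i ∈ s, f i ^ 2) * Real.sqrt (∑ i ∈ s, g i ^ 2) := by
  have h := Finset.sum_mul_sq_le_sq_mul_sq s f g
  calc ∑ i ∈ s, f i * g i ≤ |∑ i ∈ s, f i * g i| := le_abs_self _
    _ = Real.sqrt ((∑ i ∈ s, f i * g i) ^ 2) := (Real.sqrt_sq_eq_abs _).symm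
    _ ≤ Real.sqrt ((∑ i ∈ s, f i ^ 2) * ∑ i ∈ s, g i ^ 2) := Real.sqrt_le_sqrt h
    _ = _ := Real.sqrt_mul (Finset.sum_nonneg fun _ _ => sq_nonneg _) _

lemma csSum2 {ι : Type*} [Fintype ι] (p q : ι → ℝ) (hp : ∀ k, 0 ≤ p k) (hq : ∀ k, 0 ≤ q k) :
    ∑ k, Real.sqrt (p k) * Real.sqrt (q k) ≤ Real.sqrt (∑ k, p k) * Real.sqrt (∑ k, q k) := by
  have h := Finset.sum_sq_le_sum_mul_sum_of_sq_eq_mul Finset.univ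
    (r := fun k => Real.sqrt (p k) * Real.sqrt (q k)) (f := p) (g := q)
    (fun k _ => hp k) (fun k _ => hq k)
    (fun k _ => by rw [mul_pow, Real.sq_sqrt (hp k), Real.sq_sqrt (hq k)])
  calc ∑ k, Real.sqrt (p k) * Real.sqrt (q k)
      = Real.sqrt ((∑ k, Real.sqrt (p k) * Real.sqrt (q k)) ^ 2) :=
        (Real.sqrt_sq (Finset.sum_nonneg fun k _ =>
          mul_nonneg (Real.sqrt_nonneg _) (Real.sqrt_nonneg _))).symm
    _ ≤ Real.sqrt ((∑ k, p k) * ∑ k, q k) := Real.sqrt_le_sqrt h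
    _ = _ := Real.sqrt_mul (Finset.sum_nonneg fun k _ => hp k) _

/-- identification of plain functions with Euclidean space -/
def e (n : ℕ) : (Fin n → ℝ) ≃ₗ[ℝ] EuclideanSpace ℝ (Fin n) :=
  (WithLp.linearEquiv 2 ℝ (Fin n → ℝ)).symm

lemma inner_e {n : ℕ} (v w' : Fin n → ℝ) :
    (inner ℝ (e n v) (e n w') : ℝ) = ∑ j, v j * w' j := by
  simp [e, PiLp.inner_apply, RCLike.inner_apply, mul_comm]

lemma norm_e_sq {n : ℕ} (v : Fin n → ℝ) : ‖e n v‖ ^ 2 = ∑ j, v j ^ 2 := by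
  rw [← real_inner_self_eq_norm_sq, inner_e]
  exact Finset.sum_congr rfl fun j _ => (sq (v j)).symm

lemma mulVec_apply' {m m' : ℕ} (N : Matrix (Fin m) (Fin m') ℝ) (v : Fin m' → ℝ) (i : Fin m) :
    N.mulVec v i = ∑ j, N i j * v j := by
  simp [Matrix.mulVec, dotProduct]

variable {m m' : ℕ}

lemma cross_bound (D A B : Matrix (Fin m) (Fin m') ℝ)
    (V : Submodule ℝ (EuclideanSpace ℝ (Fin m')))
    (hV : ∀ i, e m' ((A + B) i) ∈ V) :
    ∑ i, ∑ j, D i j * (A + B) i j ≤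
      opNorm D * Real.sqrt (Module.finrank ℝ V) *
        (Real.sqrt (frobSq A) + Real.sqrt (frobSq B)) := by
  classical
  set r := Module.finrank ℝ V with hr
  let b : OrthonormalBasis (Fin r) ℝ V := stdOrthonormalBasis ℝ V
  let u : Fin r → EuclideanSpace ℝ (Fin m') := fun k => (b k : EuclideanSpace ℝ (Fin m'))
  let w : Fin r → (Fin m' → ℝ) := fun k => (e m').symm (u k)
  have hew : ∀ k, e m' (w k) = u k := fun k => (e m').apply_symm_apply _
  have hu : Orthonormal ℝ u := by
    have hb := b.orthonormal
    constructor
    · intro k; exact hb.1 k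
    · intro k l hkl
      have h := hb.2 hkl
      simp only [Submodule.coe_inner] at h
      exact h
  have hrow : ∀ (N : Matrix (Fin m) (Fin m') ℝ) (k : Fin r) (i : Fin m),
      (inner ℝ (u k) (e m' (N i)) : ℝ) = N.mulVec (w k) i := by
    intro N k i
    rw [← hew k, inner_e, mulVec_apply' N (w k) i]
    exact Finset.sum_congr rfl fun j _ => mul_comm _ _
  have hexp : ∀ i j, (A + B) i j = ∑ k, (A + B).mulVec (w k) i * w k j := by
    intro i j
    set x : V := ⟨e m' ((A + B) i), hV i⟩ with hxdef
    have h1 := b.sum_repr' x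
    have h2 : e m' ((A + B) i) = ∑ k, (inner ℝ (b k) x : ℝ) • u k := by
      conv_lhs => rw [show e m' ((A + B) i) = (x : EuclideanSpace ℝ (Fin m')) from rfl, ← h1]
      push_cast
      rfl
    have hcoef : ∀ k, (inner ℝ (b k) x : ℝ) = (A + B).mulVec (w k) i := by
      intro k
      rw [Submodule.coe_inner]
      exact hrow (A + B) k i
    have h4 : (A + B) i = ∑ k, (A + B).mulVec (w k) i • w k := by
      have h5 := congrArg (e m').symm h2
      rw [LinearEquiv.symm_apply_apply, map_sum] at h5
      rw [h5]
      refine Finset.sum_congr rfl fun k _ => ?_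
      rw [hcoef]
      exact _root_.map_smul ((e m').symm) _ _
    rw [congrFun h4 j, Finset.sum_apply]
    rfl
  have hT : (∑ i, ∑ j, D i j * (A + B) i j)
      = ∑ k, ∑ i, D.mulVec (w k) i * (A + B).mulVec (w k) i := by
    have hstep : ∀ i, ∑ j, D i j * (A + B) i j
        = ∑ k, D.mulVec (w k) i * (A + B).mulVec (w k) i := by
      intro i
      calc ∑ j, D i j * (A + B) i j
          = ∑ j, ∑ k, (A + B).mulVec (w k) i * (D i j * w k j) := by
            refine Finset.sum_congr rfl fun j _ => ?_
            rw [hexp i j, Finset.mul_sum]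
            exact Finset.sum_congr rfl fun k _ => by ring
        _ = ∑ k, ∑ j, (A + B).mulVec (w k) i * (D i j * w k j) := Finset.sum_comm
        _ = ∑ k, D.mulVec (w k) i * (A + B).mulVec (w k) i := by
            refine Finset.sum_congr rfl fun k _ => ?_
            rw [← Finset.mul_sum, ← mulVec_apply' D, mul_comm]
    rw [Finset.sum_congr rfl fun i _ => hstep i, Finset.sum_comm]
  have hBessel : ∀ (N : Matrix (Fin m) (Fin m') ℝ),
      (∑ k, ∑ i, N.mulVec (w k) i ^ 2) ≤ frobSq N := by
    intro N
    rw [Finset.sum_comm]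
    simp only [frobSq]
    refine Finset.sum_le_sum fun i _ => ?_
    calc ∑ k, N.mulVec (w k) i ^ 2
        = ∑ k, ‖(inner ℝ (u k) (e m' (N i)) : ℝ)‖ ^ 2 := by
          refine Finset.sum_congr rfl fun k _ => ?_
          rw [hrow, Real.norm_eq_abs, sq_abs]
      _ ≤ ‖e m' (N i)‖ ^ 2 := hu.sum_inner_products_le _
      _ = ∑ j, N i j ^ 2 := norm_e_sq _
  have hDop : ∀ k, (∑ i, D.mulVec (w k) i ^ 2) ≤ opNorm D ^ 2 := by
    intro k
    have h1 : Matrix.toEuclideanLin D (e m' (w k)) = e m (D.mulVec (w k)) := by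
      show Matrix.toEuclideanLin D ((WithLp.equiv 2 _).symm (w k))
        = (WithLp.equiv 2 _).symm (D.mulVec (w k))
      rfl
    calc ∑ i, D.mulVec (w k) i ^ 2 = ‖e m (D.mulVec (w k))‖ ^ 2 := (norm_e_sq _).symm
      _ = ‖Matrix.toEuclideanLin D (u k)‖ ^ 2 := by rw [← h1, hew k]
      _ ≤ (opNorm D * ‖u k‖) ^ 2 :=
          pow_le_pow_left₀ (norm_nonneg _) (norm_toEuc_le D (u k)) 2
      _ = opNorm D ^ 2 := by rw [hu.1 k]; ring
  have hDsum : (∑ k, ∑ i, D.mulVec (w k) i ^ 2) ≤ (r : ℝ) * opNorm D ^ 2 := by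
    calc (∑ k, ∑ i, D.mulVec (w k) i ^ 2) ≤ ∑ _k : Fin r, opNorm D ^ 2 :=
          Finset.sum_le_sum fun k _ => hDop k
      _ = (r : ℝ) * opNorm D ^ 2 := by
          rw [Finset.sum_const, Finset.card_univ, Fintype.card_fin, nsmul_eq_mul]
  have hTX : ∀ (X : Matrix (Fin m) (Fin m') ℝ),
      (∑ k, ∑ i, D.mulVec (w k) i * X.mulVec (w k) i)
        ≤ (opNorm D * Real.sqrt r) * Real.sqrt (frobSq X) := by
    intro X
    calc ∑ k, ∑ i, D.mulVec (w k) i * X.mulVec (w k) i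
        ≤ ∑ k, Real.sqrt (∑ i, D.mulVec (w k) i ^ 2) * Real.sqrt (∑ i, X.mulVec (w k) i ^ 2) :=
          Finset.sum_le_sum fun k _ => csSum _ _ _
      _ ≤ Real.sqrt (∑ k, ∑ i, D.mulVec (w k) i ^ 2)
            * Real.sqrt (∑ k, ∑ i, X.mulVec (w k) i ^ 2) :=
          csSum2 _ _ (fun k => Finset.sum_nonneg fun _ _ => sq_nonneg _)
            (fun k => Finset.sum_nonneg fun _ _ => sq_nonneg _)
      _ ≤ Real.sqrt ((r : ℝ) * opNorm D ^ 2) * Real.sqrt (frobSq X) := by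
          have h1 := Real.sqrt_le_sqrt hDsum
          have h2 := Real.sqrt_le_sqrt (hBessel X)
          exact mul_le_mul h1 h2 (Real.sqrt_nonneg _) (Real.sqrt_nonneg _)
      _ = (opNorm D * Real.sqrt r) * Real.sqrt (frobSq X) := by
          rw [Real.sqrt_mul (Nat.cast_nonneg r), Real.sqrt_sq (opNorm_nonneg D)]
          ring
  have hsplit : ∑ k, ∑ i, D.mulVec (w k) i * (A + B).mulVec (w k) i
      = (∑ k, ∑ i, D.mulVec (w k) i * A.mulVec (w k) i)
        + ∑ k, ∑ i, D.mulVec (w k) i * B.mulVec (w k) i := by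
    rw [← Finset.sum_add_distrib]
    refine Finset.sum_congr rfl fun k _ => ?_
    rw [← Finset.sum_add_distrib]
    refine Finset.sum_congr rfl fun i _ => ?_
    rw [Matrix.add_mulVec, Pi.add_apply, mul_add]
  rw [hT, hsplit]
  refine le_trans (add_le_add (hTX A) (hTX B)) (le_of_eq ?_)
  ring

lemma finrank_span_rows (N : Matrix (Fin m) (Fin m') ℝ) :
    Module.finrank ℝ (Submodule.span ℝ (Set.range fun i => e m' (N i))) = N.rank := by
  have h1 : (Set.range fun i => e m' (N i)) = (e m') '' (Set.range N.row) := by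
    rw [← Set.range_comp]; rfl
  erw [h1, Submodule.span_image]
  rw [LinearEquiv.finrank_map_eq, Matrix.rank_eq_finrank_span_row]

end Stmt3Aux

/-- if `‖Rhat − R‖_op ≤ α/2` and `Rtil` is the spectral hard threshold of `Rhat`
at level `α` (equivalently, any minimizer of `S ↦ ‖Rhat − S‖_F² + α² rank S`), then for every
matrix `S`, `‖Rtil − R‖_F² ≤ 3‖S − R‖_F² + 4α² rank S`. -/
theorem statement3 (m m' : ℕ) (Rhat R Rtil : Matrix (Fin m) (Fin m') ℝ)
    (α : ℝ) (hα : 0 < α) (hclose : opNorm (Rhat - R) ≤ α / 2)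
    (hmin : ∀ S : Matrix (Fin m) (Fin m') ℝ,
      frobSq (Rhat - Rtil) + α ^ 2 * (Rtil.rank : ℝ) ≤ frobSq (Rhat - S) + α ^ 2 * (S.rank : ℝ)) :
    ∀ S : Matrix (Fin m) (Fin m') ℝ,
      frobSq (Rtil - R) ≤ 3 * frobSq (S - R) + 4 * α ^ 2 * (S.rank : ℝ) := by
  intro S
  classical
  have hkey := hmin S
  set V₁ := Submodule.span ℝ (Set.range fun i => Stmt3Aux.e m' (Rtil i)) with hV₁
  set V₂ := Submodule.span ℝ (Set.range fun i => Stmt3Aux.e m' (S i)) with hV₂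
  set V := V₁ ⊔ V₂ with hVdef
  have hV : ∀ i, Stmt3Aux.e m' (((Rtil - R) + (R - S)) i) ∈ V := by
    intro i
    have h : ((Rtil - R) + (R - S)) i = Rtil i - S i := by
      funext j
      simp only [Matrix.add_apply, Matrix.sub_apply, Pi.sub_apply]
      ring
    rw [h, map_sub]
    exact sub_mem (Submodule.mem_sup_left (Submodule.subset_span ⟨i, rfl⟩))
      (Submodule.mem_sup_right (Submodule.subset_span ⟨i, rfl⟩))
  have hrankV : (Module.finrank ℝ V : ℝ) ≤ (Rtil.rank : ℝ) + (S.rank : ℝ) := by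
    have h := Submodule.finrank_add_le_finrank_add_finrank V₁ V₂
    rw [hV₁, hV₂, Stmt3Aux.finrank_span_rows, Stmt3Aux.finrank_span_rows] at h
    exact_mod_cast h
  have hcross := Stmt3Aux.cross_bound (Rhat - R) (Rtil - R) (R - S) V hV
  have hfRS : frobSq (R - S) = frobSq (S - R) := by
    simp only [frobSq]
    exact Finset.sum_congr rfl fun i _ => Finset.sum_congr rfl fun j _ => by
      simp only [Matrix.sub_apply]; ring
  rw [hfRS] at hcross
  set C := ∑ i, ∑ j, (Rhat - R) i j * ((Rtil - R) + (R - S)) i j with hCdef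
  have hid : frobSq (Rtil - R)
      = frobSq (S - R) + (frobSq (Rhat - Rtil) - frobSq (Rhat - S)) + 2 * C := by
    have hC : ∀ i j, (Rtil - R) i j ^ 2
        = (S - R) i j ^ 2 + ((Rhat - Rtil) i j ^ 2 - (Rhat - S) i j ^ 2)
          + 2 * ((Rhat - R) i j * ((Rtil - R) + (R - S)) i j) := by
      intro i j
      simp only [Matrix.sub_apply, Matrix.add_apply]
      ring
    calc frobSq (Rtil - R)
        = ∑ i, ∑ j, ((S - R) i j ^ 2 + ((Rhat - Rtil) i j ^ 2 - (Rhat - S) i j ^ 2)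
            + 2 * ((Rhat - R) i j * ((Rtil - R) + (R - S)) i j)) := by
          simp only [frobSq]
          exact Finset.sum_congr rfl fun i _ => Finset.sum_congr rfl fun j _ => hC i j
      _ = frobSq (S - R) + (frobSq (Rhat - Rtil) - frobSq (Rhat - S)) + 2 * C := by
          simp only [frobSq, hCdef, Finset.sum_add_distrib, Finset.sum_sub_distrib,
            Finset.mul_sum]
  -- numerics
  set a := frobSq (Rtil - R)
  set bb := frobSq (S - R)
  set sa := Real.sqrt a with hsa
  set sb := Real.sqrt bb with hsb
  set ρ := Real.sqrt (Module.finrank ℝ V) with hρ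
  have ha : 0 ≤ a := Stmt3Aux.frobSq_nonneg _
  have hb : 0 ≤ bb := Stmt3Aux.frobSq_nonneg _
  have hsa2 : sa ^ 2 = a := Real.sq_sqrt ha
  have hsb2 : sb ^ 2 = bb := Real.sq_sqrt hb
  have hρ2 : ρ ^ 2 = (Module.finrank ℝ V : ℝ) := Real.sq_sqrt (Nat.cast_nonneg _)
  have hρnn : 0 ≤ ρ := Real.sqrt_nonneg _
  have hsann : 0 ≤ sa := Real.sqrt_nonneg _
  have hsbnn : 0 ≤ sb := Real.sqrt_nonneg _
  have hCle : C ≤ (α / 2) * (ρ * (sa + sb)) := by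
    refine le_trans hcross ?_
    have h1 : opNorm (Rhat - R) * ρ * (sa + sb) = opNorm (Rhat - R) * (ρ * (sa + sb)) := by ring
    rw [h1]
    exact mul_le_mul_of_nonneg_right hclose
      (mul_nonneg hρnn (add_nonneg hsann hsbnn))
  have hAMa : α * (ρ * sa) ≤ (α ^ 2 * ρ ^ 2 + a) / 2 := by nlinarith [sq_nonneg (α * ρ - sa)]
  have hAMb : α * (ρ * sb) ≤ (α ^ 2 * ρ ^ 2 + bb) / 2 := by nlinarith [sq_nonneg (α * ρ - sb)]
  have hρbound : α ^ 2 * ρ ^ 2 ≤ α ^ 2 * (Rtil.rank : ℝ) + α ^ 2 * (S.rank : ℝ) := by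
    calc α ^ 2 * ρ ^ 2 ≤ α ^ 2 * ((Rtil.rank : ℝ) + (S.rank : ℝ)) := by
          rw [hρ2]; exact mul_le_mul_of_nonneg_left hrankV (sq_nonneg α)
      _ = α ^ 2 * (Rtil.rank : ℝ) + α ^ 2 * (S.rank : ℝ) := by ring
  have h2C : 2 * C ≤ α * (ρ * sa) + α * (ρ * sb) := by
    calc 2 * C ≤ 2 * ((α / 2) * (ρ * (sa + sb))) := by linarith
      _ = α * (ρ * sa) + α * (ρ * sb) := by ring
  linarith [hid, hkey, h2C, hAMa, hAMb, hρbound]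

end
end
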